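/- Let k ≥ 1 and t ≥ 1 be integers and let c be a colour-balanced k-edge-colouring of the complete graph K_{2kt+1}. Then K_{2kt+1} contains a spanning tree in which every colour appears on exactly 2t edges. -/

import Mathlib

set_option linter.unusedSectionVars false

open SimpleGraph Finset

variable {V : Type*} [Fintype V] [DecidableEq V]

/-- The graph on `V` with edge set `S`. -/
def gph (S : Finset (Sym2 V)) : SimpleGraph V := SimpleGraph.fromEdgeSet ↑S

/-- Number of connected components. -/
noncomputable def cc (S : Finset (Sym2 V)) : ℕ := Nat.card (gph S).ConnectedComponent

/-- Rank of the edge set `S` (graphic matroid rank). -/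
noncomputable def rk (S : Finset (Sym2 V)) : ℕ := Fintype.card V - cc S

lemma gph_adj (S : Finset (Sym2 V)) (x y : V) :
    (gph S).Adj x y ↔ s(x, y) ∈ S ∧ x ≠ y := by
  simp [gph, SimpleGraph.fromEdgeSet_adj]

lemma gph_mono {S T : Finset (Sym2 V)} (h : S ⊆ T) : gph S ≤ gph T :=
  SimpleGraph.fromEdgeSet_mono (by exact_mod_cast h)

/-- The natural map on connected components induced by a subgraph relation. -/
noncomputable def ccmap {S T : Finset (Sym2 V)} (h : S ⊆ T) :
    (gph S).ConnectedComponent → (gph T).ConnectedComponent :=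
  ConnectedComponent.lift (fun v => (gph T).connectedComponentMk v)
    (fun _ _ p _ => ConnectedComponent.sound (p.reachable.mono (gph_mono h)))

@[simp] lemma ccmap_mk {S T : Finset (Sym2 V)} (h : S ⊆ T) (v : V) :
    ccmap h ((gph S).connectedComponentMk v) = (gph T).connectedComponentMk v := rfl

lemma ccmap_surj {S T : Finset (Sym2 V)} (h : S ⊆ T) : Function.Surjective (ccmap h) := by
  intro x
  obtain ⟨v, rfl⟩ := x.exists_rep
  exact ⟨(gph S).connectedComponentMk v, rfl⟩

lemma cc_le_card (S : Finset (Sym2 V)) : cc S ≤ Fintype.card V := by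
  have : Function.Surjective ((gph S).connectedComponentMk) := fun x => x.exists_rep
  simpa [cc, Nat.card_eq_fintype_card] using Nat.card_le_card_of_surjective _ this

lemma one_le_cc [Nonempty V] (S : Finset (Sym2 V)) : 1 ≤ cc S :=
  Nat.one_le_iff_ne_zero.2 (Nat.card_ne_zero.2 ⟨⟨(gph S).connectedComponentMk (Classical.arbitrary V)⟩, inferInstance⟩)

lemma cc_mono {S T : Finset (Sym2 V)} (h : S ⊆ T) : cc T ≤ cc S :=
  Nat.card_le_card_of_surjective _ (ccmap_surj h)

lemma cc_empty : cc (∅ : Finset (Sym2 V)) = Fintype.card V := by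
  have hb : gph (∅ : Finset (Sym2 V)) = ⊥ := by simp [gph]
  have : Function.Bijective ((gph (∅ : Finset (Sym2 V))).connectedComponentMk) := by
    constructor
    · intro a b hab
      have := ConnectedComponent.exact hab
      rw [hb] at this
      exact reachable_bot.1 this
    · exact fun x => x.exists_rep
  rw [cc, ← Nat.card_eq_fintype_card]
  exact (Nat.card_eq_of_bijective _ this).symm

lemma adj_insert {S : Finset (Sym2 V)} {u v x y : V}
    (h : (gph (insert s(u,v) S)).Adj x y) :
    (gph S).Adj x y ∨ (x = u ∧ y = v) ∨ (x = v ∧ y = u) := by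
  rw [gph_adj] at h
  obtain ⟨hm, hne⟩ := h
  rcases Finset.mem_insert.1 hm with h1 | h1
  · rcases Sym2.eq_iff.1 h1 with ⟨rfl, rfl⟩ | ⟨rfl, rfl⟩
    · exact Or.inr (Or.inl ⟨rfl, rfl⟩)
    · exact Or.inr (Or.inr ⟨rfl, rfl⟩)
  · exact Or.inl ((gph_adj S x y).2 ⟨h1, hne⟩)

lemma reach_insert {S : Finset (Sym2 V)} {u v x y : V}
    (h : (gph (insert s(u,v) S)).Reachable x y) :
    (gph S).Reachable x y ∨ ((gph S).Reachable x u ∧ (gph S).Reachable v y) ∨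
      ((gph S).Reachable x v ∧ (gph S).Reachable u y) := by
  obtain ⟨w⟩ := h
  induction w with
  | nil => exact Or.inl (Reachable.refl _)
  | @cons a b d hadj p ih =>
    rcases adj_insert hadj with hA | ⟨rfl, rfl⟩ | ⟨rfl, rfl⟩
    · rcases ih with h1 | ⟨h1, h2⟩ | ⟨h1, h2⟩
      · exact Or.inl (hA.reachable.trans h1)
      · exact Or.inr (Or.inl ⟨hA.reachable.trans h1, h2⟩)
      · exact Or.inr (Or.inr ⟨hA.reachable.trans h1, h2⟩)
    · rcases ih with h1 | ⟨h1, h2⟩ | ⟨h1, h2⟩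
      · exact Or.inr (Or.inl ⟨Reachable.refl _, h1⟩)
      · exact Or.inr (Or.inl ⟨Reachable.refl _, h2⟩)
      · exact Or.inl h2
    · rcases ih with h1 | ⟨h1, h2⟩ | ⟨h1, h2⟩
      · exact Or.inr (Or.inr ⟨Reachable.refl _, h1⟩)
      · exact Or.inl h2
      · exact Or.inr (Or.inr ⟨Reachable.refl _, h2⟩)

lemma support_of_reach {S : Finset (Sym2 V)} {x y : V}
    (h : (gph S).Reachable x y) (hxy : x ≠ y) : ∃ e ∈ S, y ∈ e := by
  obtain ⟨w⟩ := h
  cases hr : w.reverse with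
  | nil => exact absurd rfl hxy
  | @cons _ b _ hadj p =>
    exact ⟨s(y, b), ((gph_adj S y b).1 hadj).1, by simp⟩


/-- key cardinality helper: surjective, non-injective map drops cardinality. -/
lemma card_succ_le_of_surj {α β : Type*} [Finite α] (f : α → β) (hs : Function.Surjective f)
    {a b : α} (hab : a ≠ b) (hf : f a = f b) : Nat.card β + 1 ≤ Nat.card α := by
  classical
  set s := Function.surjInv hs with hsdef
  have hfs : ∀ y, f (s y) = y := fun y => Function.surjInv_eq hs y
  let g : β → {x : α // x ≠ b} := fun y => if h : s y = b then ⟨a, hab⟩ else ⟨s y, h⟩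
  have hginj : Function.Injective g := by
    intro y1 y2 h12
    simp only [g] at h12
    by_cases h1 : s y1 = b <;> by_cases h2 : s y2 = b
    · rw [← hfs y1, ← hfs y2, h1, h2]
    · rw [dif_pos h1, dif_neg h2] at h12
      have ha2 : a = s y2 := congrArg Subtype.val h12
      rw [← hfs y1, ← hfs y2, h1, ← ha2]; exact hf.symm
    · rw [dif_neg h1, dif_pos h2] at h12
      have ha2 : s y1 = a := congrArg Subtype.val h12
      rw [← hfs y1, ← hfs y2, h2, ha2]; exact hf
    · rw [dif_neg h1, dif_neg h2] at h12
      have ha2 : s y1 = s y2 := congrArg Subtype.val h12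
      rw [← hfs y1, ← hfs y2, ha2]
  have h1 : Nat.card β ≤ Nat.card {x : α // x ≠ b} := Nat.card_le_card_of_injective g hginj
  have h2 : Nat.card {x : α // x ≠ b} + 1 = Nat.card α := by
    have := Set.ncard_add_ncard_compl ({b} : Set α)
    have he : ({b} : Set α).ncard = 1 := Set.ncard_singleton b
    have hc : Nat.card {x : α // x ≠ b} = ({b}ᶜ : Set α).ncard := by
      rw [← Nat.card_coe_set_eq]
      exact Nat.card_congr (Equiv.setCongr (by ext x; exact Iff.rfl))
    omega
  omega

lemma card_compl_singleton {α : Type*} [Finite α] (b : α) :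
    Nat.card {x : α // x ≠ b} + 1 = Nat.card α := by
  have := Set.ncard_add_ncard_compl ({b} : Set α)
  have he : ({b} : Set α).ncard = 1 := Set.ncard_singleton b
  have hc : Nat.card {x : α // x ≠ b} = ({b}ᶜ : Set α).ncard := by
    rw [← Nat.card_coe_set_eq]
    exact Nat.card_congr (Equiv.setCongr (by ext x; exact Iff.rfl))
  omega

lemma card_le_succ_of_almost_inj {α β : Type*} [Finite α] [Finite β] (f : α → β) {x0 y0 : α}
    (halm : ∀ a b, f a = f b → a = b ∨ (a = x0 ∧ b = y0) ∨ (a = y0 ∧ b = x0)) :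
    Nat.card α ≤ Nat.card β + 1 := by
  have hinj : Function.Injective (fun x : {x : α // x ≠ y0} => f x.1) := by
    rintro ⟨a, ha⟩ ⟨b, hb⟩ hab
    rcases halm a b hab with h | ⟨rfl, rfl⟩ | ⟨rfl, rfl⟩
    · exact Subtype.ext h
    · exact absurd rfl hb
    · exact absurd rfl ha
  have := Nat.card_le_card_of_injective _ hinj
  have := card_compl_singleton y0
  omega

lemma reach_mono {S T : Finset (Sym2 V)} (h : S ⊆ T) {u v : V}
    (hr : (gph S).Reachable u v) : (gph T).Reachable u v := hr.mono (gph_mono h)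

lemma gph_insert_diag (S : Finset (Sym2 V)) (u : V) : gph (insert s(u,u) S) = gph S := by
  ext x y
  rw [gph_adj, gph_adj, Finset.mem_insert]
  constructor
  · rintro ⟨h1 | h1, hne⟩
    · rcases Sym2.eq_iff.1 h1 with ⟨rfl, rfl⟩ | ⟨rfl, rfl⟩ <;> exact absurd rfl hne
    · exact ⟨h1, hne⟩
  · rintro ⟨h1, hne⟩; exact ⟨Or.inr h1, hne⟩

lemma cc_insert_of_reach {S : Finset (Sym2 V)} {u v : V} (h : (gph S).Reachable u v) :
    cc (insert s(u,v) S) = cc S := by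
  refine le_antisymm (cc_mono (Finset.subset_insert _ _)) ?_
  refine Nat.card_le_card_of_injective (ccmap (Finset.subset_insert s(u,v) S)) ?_
  intro a b
  refine ConnectedComponent.ind₂ (fun x y hxy => ?_) a b
  simp only [ccmap_mk] at hxy
  have hr := ConnectedComponent.exact hxy
  apply ConnectedComponent.sound
  rcases reach_insert hr with h1 | ⟨h1, h2⟩ | ⟨h1, h2⟩
  · exact h1
  · exact (h1.trans h).trans h2
  · exact (h1.trans h.symm).trans h2

lemma cc_insert_of_not_reach {S : Finset (Sym2 V)} {u v : V} (hne : u ≠ v)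
    (h : ¬ (gph S).Reachable u v) : cc (insert s(u,v) S) + 1 = cc S := by
  have hadj : (gph (insert s(u,v) S)).Adj u v := (gph_adj _ u v).2 ⟨Finset.mem_insert_self _ _, hne⟩
  set f := ccmap (Finset.subset_insert s(u,v) S) with hf
  have hfs : Function.Surjective f := ccmap_surj _
  have hmkne : (gph S).connectedComponentMk u ≠ (gph S).connectedComponentMk v :=
    fun hh => h (ConnectedComponent.exact hh)
  have hfeq : f ((gph S).connectedComponentMk u) = f ((gph S).connectedComponentMk v) := by
    simp only [hf, ccmap_mk]
    exact ConnectedComponent.sound hadj.reachable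
  have hle : cc (insert s(u,v) S) + 1 ≤ cc S := card_succ_le_of_surj f hfs hmkne hfeq
  have halm : ∀ a b, f a = f b → a = b ∨
      (a = (gph S).connectedComponentMk u ∧ b = (gph S).connectedComponentMk v) ∨
      (a = (gph S).connectedComponentMk v ∧ b = (gph S).connectedComponentMk u) := by
    intro a b
    refine ConnectedComponent.ind₂ (fun x y hxy => ?_) a b
    simp only [hf, ccmap_mk] at hxy
    rcases reach_insert (ConnectedComponent.exact hxy) with h1 | ⟨h1, h2⟩ | ⟨h1, h2⟩
    · exact Or.inl (ConnectedComponent.sound h1)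
    · exact Or.inr (Or.inl ⟨ConnectedComponent.sound h1, ConnectedComponent.sound h2.symm⟩)
    · exact Or.inr (Or.inr ⟨ConnectedComponent.sound h1, ConnectedComponent.sound h2.symm⟩)
  have hge : cc S ≤ cc (insert s(u,v) S) + 1 := card_le_succ_of_almost_inj f halm
  omega

lemma cc_insert_cases (S : Finset (Sym2 V)) (e : Sym2 V) :
    cc (insert e S) = cc S ∨ cc (insert e S) + 1 = cc S := by
  classical
  induction e using Sym2.ind with
  | _ u v =>
    by_cases huv : u = v
    · subst huv
      exact Or.inl (by rw [cc, gph_insert_diag]; rfl)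
    · by_cases hr : (gph S).Reachable u v
      · exact Or.inl (cc_insert_of_reach hr)
      · exact Or.inr (cc_insert_of_not_reach huv hr)

lemma rk_empty : rk (∅ : Finset (Sym2 V)) = 0 := by
  rw [rk, cc_empty]; omega

lemma rk_mono {S T : Finset (Sym2 V)} (h : S ⊆ T) : rk S ≤ rk T :=
  Nat.sub_le_sub_left (cc_mono h) _

lemma rk_insert_le (S : Finset (Sym2 V)) (e : Sym2 V) : rk (insert e S) ≤ rk S + 1 := by
  have h1 := cc_insert_cases S e
  have h2 := cc_le_card S
  have h3 := cc_le_card (insert e S)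
  rw [rk, rk]
  omega

lemma rk_diminishing {A B : Finset (Sym2 V)} (h : A ⊆ B) (e : Sym2 V) :
    rk (insert e B) + rk A ≤ rk B + rk (insert e A) := by
  classical
  induction e using Sym2.ind with
  | _ u v =>
    by_cases huv : u = v
    · subst huv
      have h1 : cc (insert s(u,u) B) = cc B := by rw [cc, gph_insert_diag]; rfl
      have h2 : cc (insert s(u,u) A) = cc A := by rw [cc, gph_insert_diag]; rfl
      rw [rk, rk, rk, rk, h1, h2]
    · by_cases hrB : (gph B).Reachable u v
      · have h1 : cc (insert s(u,v) B) = cc B := cc_insert_of_reach hrB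
        have h2 : rk A ≤ rk (insert s(u,v) A) := rk_mono (Finset.subset_insert _ _)
        have h3 : rk (insert s(u,v) B) = rk B := by rw [rk, rk, h1]
        omega
      · have hrA : ¬ (gph A).Reachable u v := fun hh => hrB (reach_mono h hh)
        have h1 := cc_insert_of_not_reach huv hrB
        have h2 := cc_insert_of_not_reach huv hrA
        have h3 := cc_le_card A
        have h4 := cc_le_card B
        have h5 := cc_mono h
        rw [rk, rk, rk, rk]
        omega

lemma rk_union_subset_le {A B : Finset (Sym2 V)} (h : A ⊆ B) (C : Finset (Sym2 V)) :
    rk (B ∪ C) + rk A ≤ rk B + rk (A ∪ C) := by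
  classical
  induction C using Finset.induction with
  | empty => simp
  | @insert e C he ih =>
    have h1 : B ∪ insert e C = insert e (B ∪ C) := by
      ext x; simp only [Finset.mem_insert, Finset.mem_union]; tauto
    have h2 : A ∪ insert e C = insert e (A ∪ C) := by
      ext x; simp only [Finset.mem_insert, Finset.mem_union]; tauto
    have h3 := rk_diminishing (Finset.union_subset_union h (Finset.Subset.refl C)) e
    rw [h1, h2]
    omega

lemma rk_submod (A B : Finset (Sym2 V)) : rk (A ∪ B) + rk (A ∩ B) ≤ rk A + rk B := by
  have h := rk_union_subset_le (Finset.inter_subset_left (s₁ := A) (s₂ := B)) B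
  have h1 : A ∩ B ∪ B = B := Finset.union_eq_right.2 Finset.inter_subset_right
  rw [h1] at h
  omega

lemma rk_le_card (S : Finset (Sym2 V)) : rk S ≤ S.card := by
  classical
  induction S using Finset.induction with
  | empty => simp [rk_empty]
  | @insert e S he ih =>
    have := rk_insert_le S e
    rw [Finset.card_insert_of_notMem he]
    omega

lemma rk_union_card_le (X Y : Finset (Sym2 V)) : rk (X ∪ Y) ≤ rk X + Y.card := by
  classical
  induction Y using Finset.induction with
  | empty => simp
  | @insert e Y he ih =>
    have h1 : X ∪ insert e Y = insert e (X ∪ Y) := by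
      ext x; simp only [Finset.mem_insert, Finset.mem_union]; tauto
    have h2 := rk_insert_le (X ∪ Y) e
    have h3 : Y.card + 1 = (insert e Y).card := by rw [Finset.card_insert_of_notMem he]
    rw [h1]
    omega

lemma eq_sym2_of_mem_mem {u w : V} (hne : u ≠ w) {f : Sym2 V} (hu : u ∈ f) (hw : w ∈ f)
    (hd : ¬ f.IsDiag) : f = s(u, w) := by
  induction f using Sym2.ind with
  | _ a b =>
    rw [Sym2.mem_iff] at hu hw
    rw [Sym2.mk_isDiag_iff] at hd
    rcases hu with rfl | rfl <;> rcases hw with h | h <;>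
      first
        | (exact absurd h.symm hne)
        | (exact absurd h hne)
        | (subst h; rfl)
        | (subst h; exact Sym2.eq_swap)
        | (exact absurd rfl hd)
        | (exact absurd h (Ne.symm hne))
        | (exact absurd rfl hne)

lemma rk_star (u : V) : ∀ (X : Finset (Sym2 V)), (∀ f ∈ X, u ∈ f ∧ ¬ f.IsDiag) →
    rk X = X.card := by
  classical
  intro X
  induction X using Finset.induction with
  | empty => intro _; simp [rk_empty]
  | @insert f X hf ih =>
    intro hX
    obtain ⟨hu, hd⟩ := hX f (Finset.mem_insert_self _ _)
    obtain ⟨w, hw, hwne⟩ : ∃ w, w ∈ f ∧ w ≠ u := by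
      induction f using Sym2.ind with
      | _ a b =>
        rw [Sym2.mk_isDiag_iff] at hd
        rw [Sym2.mem_iff] at hu
        rcases hu with rfl | rfl
        · exact ⟨b, Sym2.mem_mk_right _ _, fun hh => hd hh.symm⟩
        · exact ⟨a, Sym2.mem_mk_left _ _, fun hh => hd hh⟩
    have hfeq : f = s(u, w) := eq_sym2_of_mem_mem (Ne.symm hwne) hu hw hd
    have hnr : ¬ (gph X).Reachable u w := by
      intro hr
      obtain ⟨e, heX, hwe⟩ := support_of_reach hr (Ne.symm hwne)
      have hue := (hX e (Finset.mem_insert_of_mem heX)).1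
      have hde := (hX e (Finset.mem_insert_of_mem heX)).2
      have : e = s(u, w) := eq_sym2_of_mem_mem (Ne.symm hwne) hue hwe hde
      rw [← hfeq] at this
      exact hf (this ▸ heX)
    have hcc := cc_insert_of_not_reach (Ne.symm hwne) hnr
    have h1 := cc_le_card X
    have h2 : rk X = X.card := ih (fun g hg => hX g (Finset.mem_insert_of_mem hg))
    rw [hfeq, Finset.card_insert_of_notMem (hfeq ▸ hf)]
    rw [rk] at h2 ⊢
    omega

lemma cc_sdiff_star {S : Finset (Sym2 V)} {u v : V} (hne : u ≠ v) (he : s(u,v) ∈ S) :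
    cc S + 1 ≤ cc (S \ S.filter (fun f => u ∈ f)) := by
  classical
  set S' := S \ S.filter (fun f => u ∈ f) with hS'
  have hsub : S' ⊆ S := Finset.sdiff_subset
  have hnu : ∀ e ∈ S', u ∉ e := by
    intro e heS' heu
    rw [hS', Finset.mem_sdiff, Finset.mem_filter] at heS'
    exact heS'.2 ⟨heS'.1, heu⟩
  have hmkne : (gph S').connectedComponentMk u ≠ (gph S').connectedComponentMk v := by
    intro hh
    have hr := (ConnectedComponent.exact hh).symm
    obtain ⟨e, heS', hue⟩ := support_of_reach hr (Ne.symm hne)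
    exact hnu e heS' hue
  have hfeq : ccmap hsub ((gph S').connectedComponentMk u)
      = ccmap hsub ((gph S').connectedComponentMk v) := by
    simp only [ccmap_mk]
    exact ConnectedComponent.sound ((gph_adj S u v).2 ⟨he, hne⟩).reachable
  exact card_succ_le_of_surj _ (ccmap_surj hsub) hmkne hfeq

lemma two_card_le_rk (S : Finset (Sym2 V)) (hS : ∀ e ∈ S, ¬ e.IsDiag) :
    2 * S.card ≤ rk S * (rk S + 1) := by
  classical
  induction S using Finset.strongInduction with
  | _ S ih =>
  rcases S.eq_empty_or_nonempty with rfl | ⟨e, he⟩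
  · simp
  · obtain ⟨⟨u, v⟩, rfl⟩ := e.exists_rep
    have hne : u ≠ v := by
      intro hh; exact hS _ he (by rw [hh]; exact Sym2.mk_isDiag_iff.2 rfl)
    set star := S.filter (fun f => u ∈ f) with hstar
    have hstar_sub : star ⊆ S := Finset.filter_subset _ _
    have hestar : s(u,v) ∈ star := Finset.mem_filter.2 ⟨he, Sym2.mem_mk_left _ _⟩
    set d := star.card with hd
    have hd1 : 1 ≤ d := Finset.card_pos.2 ⟨_, hestar⟩
    have hrkstar : rk star = d := rk_star u star
      (fun f hf => ⟨(Finset.mem_filter.1 hf).2, hS f (hstar_sub hf)⟩)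
    have hdle : d ≤ rk S := hrkstar ▸ rk_mono hstar_sub
    set S' := S \ star with hS'
    have hS'ss : S' ⊂ S := by
      rw [hS']
      exact Finset.sdiff_ssubset hstar_sub ⟨_, hestar⟩
    have hcard : S'.card + d = S.card := by
      rw [hS', hd]
      exact Finset.card_sdiff_add_card_eq_card hstar_sub
    have hihyp := ih S' hS'ss (fun f hf => hS f (Finset.sdiff_subset hf))
    have hr1 : rk S' + 1 ≤ rk S := by
      have hccs := cc_sdiff_star hne he
      have h1 := cc_le_card S'
      have h2 := cc_le_card S
      rw [rk, rk]
      rw [← hS'] at hccs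
      omega
    have hr2 : rk S ≤ rk S' + d := by
      have := rk_union_card_le S' star
      rw [hS', Finset.sdiff_union_of_subset hstar_sub] at this
      rw [hS']
      omega
    -- algebra
    obtain ⟨r0, hr0⟩ : ∃ r0, rk S = r0 + 1 := ⟨rk S - 1, by omega⟩
    have hmul : rk S' * (rk S' + 1) ≤ r0 * (r0 + 1) :=
      Nat.mul_le_mul (by omega) (by omega)
    have hfin : r0 * (r0 + 1) + 2 * (r0 + 1) = (r0 + 1) * (r0 + 1 + 1) := by ring
    rw [hr0]
    omega

section Rado
variable {α : Type*} [DecidableEq α]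

lemma rado_spanned {r : Finset α → ℕ}
    (hmono : ∀ A B : Finset α, A ⊆ B → r A ≤ r B)
    (hsub : ∀ A B : Finset α, r (A ∪ B) + r (A ∩ B) ≤ r A + r B)
    {x : α} {A B : Finset α} (hAB : A ⊆ B)
    (hx : r (insert x A) = r A) : r (insert x B) = r B := by
  have h1 := hsub (insert x A) B
  have h2 : insert x A ∪ B = insert x B := by
    ext y
    simp only [Finset.mem_insert, Finset.mem_union]
    constructor
    · rintro ((rfl | h) | h)
      exacts [Or.inl rfl, Or.inr (hAB h), Or.inr h]
    · rintro (rfl | h)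
      exacts [Or.inl (Or.inl rfl), Or.inr h]
  have h3 : A ⊆ insert x A ∩ B :=
    fun y hy => Finset.mem_inter.2 ⟨Finset.mem_insert_of_mem hy, hAB hy⟩
  have h4 := hmono _ _ h3
  have h5 := hmono B (insert x B) (Finset.subset_insert _ _)
  rw [h2, hx] at h1
  omega

lemma rado_drop {r : Finset α → ℕ} (h0 : r ∅ = 0)
    (hmono : ∀ A B : Finset α, A ⊆ B → r A ≤ r B)
    (hsub : ∀ A B : Finset α, r (A ∪ B) + r (A ∩ B) ≤ r A + r B)
    (Z : Finset α) : ∀ (D : Finset α), (∀ f ∈ D, r {f} = 0) → r (Z ∪ D) = r Z := by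
  intro D
  induction D using Finset.induction with
  | empty => intro _; rw [Finset.union_empty]
  | @insert f D hf ih =>
    intro hD
    have h1 : Z ∪ insert f D = insert f (Z ∪ D) := by
      ext y; simp only [Finset.mem_insert, Finset.mem_union]; tauto
    have h2 : r (insert f (∅ : Finset α)) = r ∅ := by
      have : insert f (∅ : Finset α) = {f} := rfl
      rw [this, h0, hD f (Finset.mem_insert_self _ _)]
    rw [h1, rado_spanned hmono hsub (Finset.empty_subset _) h2,
      ih (fun g hg => hD g (Finset.mem_insert_of_mem hg))]

lemma rado_span_set {r : Finset α → ℕ}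
    (hmono : ∀ A B : Finset α, A ⊆ B → r A ≤ r B)
    (hsub : ∀ A B : Finset α, r (A ∪ B) + r (A ∩ B) ≤ r A + r B)
    (Z : Finset α) : ∀ (X : Finset α), (∀ f ∈ X, r (insert f Z) = r Z) → r (Z ∪ X) = r Z := by
  intro X
  induction X using Finset.induction with
  | empty => intro _; rw [Finset.union_empty]
  | @insert f X hf ih =>
    intro hX
    have h1 : Z ∪ insert f X = insert f (Z ∪ X) := by
      ext y; simp only [Finset.mem_insert, Finset.mem_union]; tauto
    rw [h1, rado_spanned hmono hsub Finset.subset_union_left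
        (hX f (Finset.mem_insert_self _ _)),
      ih (fun g hg => hX g (Finset.mem_insert_of_mem hg))]

/-- Rado's theorem, abstract rank-function form. -/
lemma rado {k : ℕ} : ∀ (N : ℕ) (r : Finset α → ℕ) (E : Finset α) (c : α → Fin k)
    (v : Fin k → ℕ),
    (∑ i, v i) = N →
    r ∅ = 0 →
    (∀ A B : Finset α, A ⊆ B → r A ≤ r B) →
    (∀ (A : Finset α) (e : α), r (insert e A) ≤ r A + 1) →
    (∀ A B : Finset α, r (A ∪ B) + r (A ∩ B) ≤ r A + r B) →
    (∀ e ∈ E, r {e} = 1) →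
    (∀ S : Finset (Fin k), ∑ i ∈ S, v i ≤ r (E.filter (fun e => c e ∈ S))) →
    ∃ I, I ⊆ E ∧ r I = I.card ∧ ∀ i, (I.filter (fun e => c e = i)).card = v i := by
  intro N
  induction N with
  | zero =>
    intro r E c v hN h0 hmono hins hsub h1 hcond
    have hv : ∀ i, v i = 0 := by
      intro i
      exact Finset.sum_eq_zero_iff.1 hN i (Finset.mem_univ i)
    exact ⟨∅, Finset.empty_subset _, by simp [h0], fun i => by simp [hv i]⟩
  | succ N ihN =>
    intro r E c v hN h0 hmono hins hsub h1 hcond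
    obtain ⟨i, hi⟩ : ∃ i, 1 ≤ v i := by
      by_contra hcon
      push_neg at hcon
      have : ∑ j, v j = 0 := Finset.sum_eq_zero (fun j _ => by have := hcon j; omega)
      omega
    set Ci := E.filter (fun e => c e = i) with hCi
    -- step 1: find a good element e of colour i
    have hgood : ∃ e ∈ Ci, ∀ S : Finset (Fin k), i ∉ S →
        (∑ j ∈ S, v j) + 1 ≤ r (insert e (E.filter (fun f => c f ∈ S))) := by
      by_contra hcon
      push_neg at hcon
      -- build a tight spanning set of colours
      have haux : ∀ X : Finset α, X ⊆ Ci → ∃ T : Finset (Fin k), i ∉ T ∧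
          r (E.filter (fun f => c f ∈ T)) = ∑ j ∈ T, v j ∧
          ∀ f ∈ X, r (insert f (E.filter (fun f => c f ∈ T)))
            = r (E.filter (fun f => c f ∈ T)) := by
        intro X
        induction X using Finset.induction with
        | empty =>
          intro _
          refine ⟨∅, Finset.notMem_empty i, ?_, fun f hf => absurd hf (Finset.notMem_empty f)⟩
          have : E.filter (fun f => c f ∈ (∅ : Finset (Fin k))) = ∅ := by
            apply Finset.filter_false_of_mem; intro f _; exact Finset.notMem_empty _
          rw [this, h0, Finset.sum_empty]
        | @insert e X he ih =>
          intro hXCi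
          obtain ⟨T, hiT, htight, hspan⟩ := ih (fun f hf => hXCi (Finset.mem_insert_of_mem hf))
          have heCi : e ∈ Ci := hXCi (Finset.mem_insert_self _ _)
          obtain ⟨S, hiS, hSlt⟩ := hcon e heCi
          have hSle : r (insert e (E.filter (fun f => c f ∈ S))) ≤ ∑ j ∈ S, v j := by omega
          have hSmono : r (E.filter (fun f => c f ∈ S))
              ≤ r (insert e (E.filter (fun f => c f ∈ S))) :=
            hmono _ _ (Finset.subset_insert _ _)
          have hcondS := hcond S
          have hStight : r (E.filter (fun f => c f ∈ S)) = ∑ j ∈ S, v j := by omega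
          have hSspan : r (insert e (E.filter (fun f => c f ∈ S)))
              = r (E.filter (fun f => c f ∈ S)) := by omega
          refine ⟨T ∪ S, by simp [hiT, hiS], ?_, ?_⟩
          · -- tightness of union
            have hm1 : E.filter (fun f => c f ∈ T) ∪ E.filter (fun f => c f ∈ S)
                = E.filter (fun f => c f ∈ T ∪ S) := by
              ext f
              simp only [Finset.mem_union, Finset.mem_filter]
              tauto
            have hm2 : E.filter (fun f => c f ∈ T) ∩ E.filter (fun f => c f ∈ S)
                = E.filter (fun f => c f ∈ T ∩ S) := by
              ext f
              simp only [Finset.mem_inter, Finset.mem_filter]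
              tauto
            have hsub1 := hsub (E.filter (fun f => c f ∈ T)) (E.filter (fun f => c f ∈ S))
            rw [hm1, hm2] at hsub1
            have hcondTS := hcond (T ∪ S)
            have hcondTint := hcond (T ∩ S)
            have hsums := Finset.sum_union_inter (s₁ := T) (s₂ := S) (f := v)
            omega
          · -- spanning
            intro f hf
            have hsubTS : T ⊆ T ∪ S := Finset.subset_union_left
            have hfilsubT : E.filter (fun f => c f ∈ T) ⊆ E.filter (fun f => c f ∈ T ∪ S) := by
              intro g hg
              rw [Finset.mem_filter] at hg ⊢
              exact ⟨hg.1, Finset.mem_union_left _ hg.2⟩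
            have hfilsubS : E.filter (fun f => c f ∈ S) ⊆ E.filter (fun f => c f ∈ T ∪ S) := by
              intro g hg
              rw [Finset.mem_filter] at hg ⊢
              exact ⟨hg.1, Finset.mem_union_right _ hg.2⟩
            rcases Finset.mem_insert.1 hf with rfl | hfX
            · exact rado_spanned hmono hsub hfilsubS hSspan
            · exact rado_spanned hmono hsub hfilsubT (hspan f hfX)
      obtain ⟨T, hiT, htight, hspan⟩ := haux Ci (Finset.Subset.refl _)
      -- derive contradiction
      have hCiT : E.filter (fun f => c f ∈ insert i T)
          = E.filter (fun f => c f ∈ T) ∪ Ci := by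
        ext f
        simp only [Finset.mem_union, Finset.mem_filter, Finset.mem_insert, hCi]
        tauto
      have hspanCi : r (E.filter (fun f => c f ∈ T) ∪ Ci) = r (E.filter (fun f => c f ∈ T)) :=
        rado_span_set hmono hsub _ Ci hspan
      have hcondiT := hcond (insert i T)
      rw [hCiT, hspanCi, htight, Finset.sum_insert hiT] at hcondiT
      omega
    obtain ⟨e, heCi, hegood⟩ := hgood
    have heE : e ∈ E := (Finset.mem_filter.1 heCi).1
    have hcei : c e = i := (Finset.mem_filter.1 heCi).2
    have hre : r {e} = 1 := h1 e heE
    -- contracted rank function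
    set r' : Finset α → ℕ := fun A => r (insert e A) - 1 with hr'
    have hone : ∀ A : Finset α, 1 ≤ r (insert e A) := by
      intro A
      have : ({e} : Finset α) ⊆ insert e A := by
        intro x hx
        rw [Finset.mem_singleton] at hx
        exact hx ▸ Finset.mem_insert_self _ _
      have := hmono _ _ this
      omega
    have hr'eq : ∀ A : Finset α, r (insert e A) = r' A + 1 := by
      intro A
      have := hone A
      simp only [hr']
      omega
    set E'' := (E.erase e).filter (fun f => r (insert e {f}) = 2) with hE''
    set v' := Function.update v i (v i - 1) with hv'
    -- hypotheses for recursion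
    have h0' : r' ∅ = 0 := by
      have hh : insert e (∅ : Finset α) = {e} := rfl
      simp only [hr', hh, hre]
    have hmono' : ∀ A B : Finset α, A ⊆ B → r' A ≤ r' B := by
      intro A B hAB
      have := hmono (insert e A) (insert e B) (Finset.insert_subset_insert _ hAB)
      simp only [hr']
      omega
    have hins' : ∀ (A : Finset α) (f : α), r' (insert f A) ≤ r' A + 1 := by
      intro A f
      have hcomm : insert e (insert f A) = insert f (insert e A) := Finset.insert_comm _ _ _
      have := hins (insert e A) f
      have he1 := hr'eq A
      have he2 := hr'eq (insert f A)
      rw [hcomm] at he2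
      omega
    have hsub' : ∀ A B : Finset α, r' (A ∪ B) + r' (A ∩ B) ≤ r' A + r' B := by
      intro A B
      have hu : insert e (A ∪ B) = insert e A ∪ insert e B := by
        ext y; simp only [Finset.mem_insert, Finset.mem_union]; tauto
      have hi2 : insert e (A ∩ B) = insert e A ∩ insert e B := by
        ext y; simp only [Finset.mem_insert, Finset.mem_inter]; tauto
      have := hsub (insert e A) (insert e B)
      rw [← hu, ← hi2] at this
      have e1 := hr'eq (A ∪ B); have e2 := hr'eq (A ∩ B)
      have e3 := hr'eq A; have e4 := hr'eq B
      omega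
    have h1' : ∀ f ∈ E'', r' {f} = 1 := by
      intro f hf
      have := (Finset.mem_filter.1 hf).2
      simp only [hr']
      omega
    have hr'zero : ∀ f ∈ E, r (insert e {f}) ≠ 2 → r' {f} = 0 := by
      intro f hfE hf2
      have hle : r (insert e {f}) ≤ 2 := by
        have hp : insert e ({f} : Finset α) = insert f {e} := by
          ext y; simp only [Finset.mem_insert, Finset.mem_singleton]; tauto
        have := hins ({e} : Finset α) f
        rw [hp]
        omega
      have := hone {f}
      simp only [hr']
      omega
    have hcond' : ∀ S : Finset (Fin k), ∑ j ∈ S, v' j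
        ≤ r' (E''.filter (fun f => c f ∈ S)) := by
      intro S
      set X := E.filter (fun f => c f ∈ S) with hX
      have hEfil : E''.filter (fun f => c f ∈ S)
          = (X.erase e).filter (fun f => r (insert e {f}) = 2) := by
        ext f
        simp only [hE'', hX, Finset.mem_filter, Finset.mem_erase]
        tauto
      have hr'fil : r' ((X.erase e).filter (fun f => r (insert e {f}) = 2)) = r' (X.erase e) := by
        have hsplit := Finset.filter_union_filter_not_eq
          (fun f => r (insert e {f}) = 2) (X.erase e)
        have := rado_drop h0' hmono' hsub'
          ((X.erase e).filter (fun f => r (insert e {f}) = 2))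
          ((X.erase e).filter (fun f => ¬ r (insert e {f}) = 2))
          (fun f hf => by
            have hf1 := Finset.mem_filter.1 hf
            have hfE : f ∈ E := (Finset.mem_filter.1 (Finset.mem_of_mem_erase hf1.1)).1
            exact hr'zero f hfE hf1.2)
        rw [hsplit] at this
        exact this.symm
      rw [hEfil, hr'fil]
      by_cases hiS : i ∈ S
      · have heX : e ∈ X := Finset.mem_filter.2 ⟨heE, by rw [hcei]; exact hiS⟩
        have hin : insert e (X.erase e) = X := Finset.insert_erase heX
        have hrw : r X = r' (X.erase e) + 1 := by
          conv_lhs => rw [← hin]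
          exact hr'eq _
        have hsum' : ∑ j ∈ S, v' j = (v i - 1) + ∑ j ∈ S.erase i, v j := by
          rw [hv', Finset.sum_update_of_mem hiS, Finset.erase_eq]
        have hsum : ∑ j ∈ S, v j = v i + ∑ j ∈ S.erase i, v j :=
          (Finset.add_sum_erase S v hiS).symm
        have := hcond S
        rw [← hX] at this
        omega
      · have heX : e ∉ X := by
          intro hh
          exact hiS (by rw [← hcei]; exact (Finset.mem_filter.1 hh).2)
        have hin : X.erase e = X := Finset.erase_eq_of_notMem heX
        have hsum' : ∑ j ∈ S, v' j = ∑ j ∈ S, v j := by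
          apply Finset.sum_congr rfl
          intro j hj
          rw [hv', Function.update_of_ne (fun hh => hiS (by rw [← hh]; exact hj)) _ _]
        have := hegood S hiS
        rw [← hX] at this
        have := hr'eq X
        rw [hin]
        omega
    have hN' : ∑ j, v' j = N := by
      have h1s : ∑ j, v' j = (v i - 1) + ∑ j ∈ Finset.univ.erase i, v j := by
        rw [hv', Finset.sum_update_of_mem (Finset.mem_univ i), Finset.erase_eq]
      have h2s : ∑ j, v j = v i + ∑ j ∈ Finset.univ.erase i, v j :=
        (Finset.add_sum_erase _ v (Finset.mem_univ i)).symm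
      omega
    obtain ⟨I', hI'sub, hI'rk, hI'quota⟩ := ihN r' E'' c v' hN' h0' hmono' hins' hsub' h1' hcond'
    have heI' : e ∉ I' := by
      intro hh
      have := hI'sub hh
      rw [hE''] at this
      exact (Finset.mem_erase.1 (Finset.mem_filter.1 this).1).1 rfl
    have hI'E : I' ⊆ E := by
      intro f hf
      have := hI'sub hf
      rw [hE''] at this
      exact Finset.mem_of_mem_erase (Finset.mem_filter.1 this).1
    refine ⟨insert e I', Finset.insert_subset heE hI'E, ?_, ?_⟩
    · rw [hr'eq, hI'rk, Finset.card_insert_of_notMem heI']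
    · intro j
      by_cases hji : j = i
      · subst hji
        rw [Finset.filter_insert, if_pos hcei]
        have : e ∉ I'.filter (fun f => c f = j) := fun hh => heI' (Finset.mem_filter.1 hh).1
        rw [Finset.card_insert_of_notMem this, hI'quota j, hv',
          Function.update_self]
        omega
      · rw [Finset.filter_insert, if_neg (by rw [hcei]; exact fun hh => hji hh.symm)]
        rw [hI'quota j, hv', Function.update_of_ne hji]
end Rado


section Main
variable {V : Type*} [Fintype V] [DecidableEq V]

lemma rk_singleton {u v : V} (hne : u ≠ v) : rk {s(u, v)} = 1 := by
  have := rk_star u ({s(u,v)} : Finset (Sym2 V)) (by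
    intro f hf
    rw [Finset.mem_singleton] at hf
    subst hf
    exact ⟨Sym2.mem_mk_left _ _, fun hd => hne (Sym2.mk_isDiag_iff.1 hd)⟩)
  simpa using this

lemma le_of_mul_succ_le {a r : ℕ} (h : a * (a + 1) ≤ r * (r + 1)) : a ≤ r := by
  by_contra hcon
  push_neg at hcon
  obtain ⟨b, rfl⟩ : ∃ b, a = b + 1 := ⟨a - 1, by omega⟩
  have h1 : r * (r + 1) ≤ b * (b + 1) := Nat.mul_le_mul (by omega) (by omega)
  nlinarith

end Main

/-- every colour-balanced `k`-edge-colouring of `K_{2kt+1}` admits a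
colour-balanced spanning tree (each colour on exactly `2t` edges). -/
theorem stmt_6 (k t : ℕ) (hk : 1 ≤ k) (ht : 1 ≤ t)
    (c : Sym2 (Fin (2 * k * t + 1)) → Fin k)
    (hbal : ∀ i j : Fin k,
      {e ∈ (⊤ : SimpleGraph (Fin (2 * k * t + 1))).edgeSet | c e = i}.ncard =
        {e ∈ (⊤ : SimpleGraph (Fin (2 * k * t + 1))).edgeSet | c e = j}.ncard) :
    ∃ T : SimpleGraph (Fin (2 * k * t + 1)), T.IsTree ∧
      ∀ i : Fin k, {e ∈ T.edgeSet | c e = i}.ncard = 2 * t := by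
  classical
  set E := (⊤ : SimpleGraph (Fin (2 * k * t + 1))).edgeFinset with hE
  have hcard : Fintype.card (Fin (2 * k * t + 1)) = 2 * k * t + 1 :=
    Fintype.card_fin _
  have hEdiag : ∀ e ∈ E, ¬ e.IsDiag := by
    intro e he
    exact SimpleGraph.not_isDiag_of_mem_edgeSet _ (SimpleGraph.mem_edgeFinset.1 he)
  -- class sizes
  have hsetfin : ∀ i : Fin k, {e ∈ (⊤ : SimpleGraph (Fin (2 * k * t + 1))).edgeSet | c e = i}
      = ↑(E.filter (fun e => c e = i)) := by
    intro i
    ext e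
    simp [hE, SimpleGraph.mem_edgeFinset]
  have hncard : ∀ i : Fin k, {e ∈ (⊤ : SimpleGraph (Fin (2 * k * t + 1))).edgeSet | c e = i}.ncard
      = (E.filter (fun e => c e = i)).card := by
    intro i
    rw [hsetfin i, Set.ncard_coe_finset]
  have hEcard : E.card = (2 * k * t + 1).choose 2 := by
    rw [hE, SimpleGraph.card_edgeFinset_top_eq_card_choose_two, hcard]
  have hchoose : (2 * k * t + 1).choose 2 = k * t * (2 * k * t + 1) := by
    rw [Nat.choose_two_right]
    have h0 : 2 * k * t + 1 - 1 = 2 * k * t := by omega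
    rw [h0]
    have h1 : (2 * k * t + 1) * (2 * k * t) = (k * t * (2 * k * t + 1)) * 2 := by ring
    rw [h1, Nat.mul_div_cancel _ (by norm_num)]
  have hfib : E.card = ∑ i : Fin k, (E.filter (fun e => c e = i)).card :=
    Finset.card_eq_sum_card_fiberwise (fun e _ => Finset.mem_univ (c e))
  have hm : ∀ i : Fin k, (E.filter (fun e => c e = i)).card = t * (2 * k * t + 1) := by
    intro i
    have hall : ∀ j : Fin k, (E.filter (fun e => c e = j)).card
        = (E.filter (fun e => c e = i)).card := by
      intro j
      rw [← hncard, ← hncard]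
      exact hbal j i
    have hsum : E.card = k * (E.filter (fun e => c e = i)).card := by
      rw [hfib]
      rw [Finset.sum_congr rfl (fun j _ => hall j), Finset.sum_const, Finset.card_univ,
        Fintype.card_fin, smul_eq_mul]
    have : k * (E.filter (fun e => c e = i)).card = k * (t * (2 * k * t + 1)) := by
      rw [← hsum, hEcard, hchoose]; ring
    exact Nat.eq_of_mul_eq_mul_left (by omega) this
  -- Rado condition
  have hcond : ∀ S : Finset (Fin k), ∑ i ∈ S, 2 * t
      ≤ rk (E.filter (fun e => c e ∈ S)) := by
    intro S
    set X := E.filter (fun e => c e ∈ S) with hX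
    have hXsub : X ⊆ E := Finset.filter_subset _ _
    have hXdiag : ∀ e ∈ X, ¬ e.IsDiag := fun e he => hEdiag e (hXsub he)
    have hXfib : X.card = ∑ i ∈ S, (X.filter (fun e => c e = i)).card :=
      Finset.card_eq_sum_card_fiberwise (fun e he => (Finset.mem_filter.1 he).2)
    have hXfil : ∀ i ∈ S, (X.filter (fun e => c e = i)) = E.filter (fun e => c e = i) := by
      intro i hi
      ext e
      simp only [hX, Finset.mem_filter]
      constructor
      · rintro ⟨⟨h1, _⟩, h3⟩; exact ⟨h1, h3⟩
      · rintro ⟨h1, h2⟩; exact ⟨⟨h1, h2 ▸ hi⟩, h2⟩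
    have hXcard : X.card = S.card * (t * (2 * k * t + 1)) := by
      rw [hXfib, Finset.sum_congr rfl (fun i hi => by rw [hXfil i hi, hm i]),
        Finset.sum_const, smul_eq_mul]
    have hXrk := two_card_le_rk X hXdiag
    have hsumS : ∑ i ∈ S, 2 * t = S.card * (2 * t) := by
      rw [Finset.sum_const, smul_eq_mul]
    rw [hsumS]
    apply le_of_mul_succ_le
    have hsk : S.card ≤ k := by
      simpa using Finset.card_le_univ S
    calc S.card * (2 * t) * (S.card * (2 * t) + 1)
        ≤ 2 * X.card := by
          rw [hXcard]
          have h2 : S.card * (2 * t) + 1 ≤ 2 * k * t + 1 := by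
            have ha := Nat.mul_le_mul_right (2 * t) hsk
            have hb : k * (2 * t) = 2 * k * t := by ring
            omega
          calc S.card * (2 * t) * (S.card * (2 * t) + 1)
              ≤ S.card * (2 * t) * (2 * k * t + 1) := Nat.mul_le_mul_left _ h2
            _ = 2 * (S.card * (t * (2 * k * t + 1))) := by ring
      _ ≤ rk X * (rk X + 1) := hXrk
  -- apply Rado's theorem
  obtain ⟨I, hIE, hIrk, hIquota⟩ := rado (k := k) (∑ _i : Fin k, 2 * t) rk E c
    (fun _ => 2 * t) rfl rk_empty (fun A B h => rk_mono h) (fun A e => rk_insert_le A e)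
    rk_submod
    (fun e he => by
      obtain ⟨⟨u, v⟩, rfl⟩ := e.exists_rep
      have : u ≠ v := fun hh => hEdiag _ he (by rw [hh]; exact Sym2.mk_isDiag_iff.2 rfl)
      exact rk_singleton this)
    hcond
  have hIcard : I.card = 2 * k * t := by
    have h1 : I.card = ∑ i : Fin k, (I.filter (fun e => c e = i)).card :=
      Finset.card_eq_sum_card_fiberwise (fun e _ => Finset.mem_univ (c e))
    rw [h1, Finset.sum_congr rfl (fun i _ => hIquota i), Finset.sum_const,
      Finset.card_univ, Fintype.card_fin, smul_eq_mul]
    ring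
  have hccI : cc I = 1 := by
    have h1 : rk I = 2 * k * t := by rw [hIrk, hIcard]
    have h2 := cc_le_card I
    have h3 : (1 : ℕ) ≤ cc I := one_le_cc I
    rw [rk, hcard] at h1
    omega
  have hIdiag : ∀ e ∈ I, ¬ e.IsDiag := fun e he => hEdiag e (hIE he)
  refine ⟨gph I, ⟨?_, ?_⟩, ?_⟩
  · -- connected
    rw [SimpleGraph.connected_iff]
    constructor
    · intro u v
      have hsub : Subsingleton (gph I).ConnectedComponent :=
        (Nat.card_eq_one_iff_unique.1 hccI).1
      exact SimpleGraph.ConnectedComponent.exact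
        (Subsingleton.elim ((gph I).connectedComponentMk u) ((gph I).connectedComponentMk v))
    · exact ⟨⟨0, by omega⟩⟩
  · -- acyclic
    rw [SimpleGraph.isAcyclic_iff_forall_edge_isBridge]
    intro e he
    induction e using Sym2.ind with
    | _ u v =>
      have hadj : (gph I).Adj u v := (SimpleGraph.mem_edgeSet _).1 he
      have huvI : s(u, v) ∈ I := ((gph_adj I u v).1 hadj).1
      have hneuv : u ≠ v := ((gph_adj I u v).1 hadj).2
      rw [SimpleGraph.isBridge_iff]
      show ¬ (gph I \ SimpleGraph.fromEdgeSet {s(u, v)}).Reachable u v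
      have hgeq : gph I \ SimpleGraph.fromEdgeSet {s(u, v)} = gph (I.erase s(u, v)) := by
        ext x y
        rw [SimpleGraph.sdiff_adj, gph_adj, gph_adj, SimpleGraph.fromEdgeSet_adj]
        constructor
        · rintro ⟨⟨h1, h2⟩, h3⟩
          refine ⟨Finset.mem_erase.2 ⟨?_, h1⟩, h2⟩
          intro hh
          exact h3 ⟨by rw [hh]; exact Set.mem_singleton _, h2⟩
        · rintro ⟨h1, h2⟩
          have := Finset.mem_erase.1 h1
          exact ⟨⟨this.2, h2⟩, fun hcon => this.1 hcon.1⟩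
      rw [hgeq]
      intro hr
      have h1 : cc (insert s(u,v) (I.erase s(u,v))) = cc (I.erase s(u,v)) :=
        cc_insert_of_reach hr
      rw [Finset.insert_erase huvI] at h1
      have h2 : rk (I.erase s(u,v)) = rk I := by rw [rk, rk, h1]
      have h3 := rk_le_card (I.erase s(u,v))
      have h4 : (I.erase s(u,v)).card + 1 = I.card := Finset.card_erase_add_one huvI
      have h5 : rk I = I.card := hIrk
      omega
  · -- colour counts
    intro i
    have hedge : (gph I).edgeSet = ↑I := by
      rw [gph, SimpleGraph.edgeSet_fromEdgeSet]
      ext e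
      simp only [Set.mem_diff, Set.mem_setOf_eq, Finset.mem_coe]
      exact ⟨fun h => h.1, fun h => ⟨h, hIdiag e h⟩⟩
    have hseteq : {e ∈ (gph I).edgeSet | c e = i} = ↑(I.filter (fun e => c e = i)) := by
      rw [hedge, Finset.coe_filter]
      rfl
    rw [hseteq, Set.ncard_coe_finset, hIquota i]
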